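/- The Locally Toeplitz operator $LT_{a\cdot 1}$ with $a(x) = x^{-1/4}$ and $f \equiv 1$ satisfies $\|LT_{a\cdot 1}\|_G^2 = 2 < \infty$, but its square satisfies $\|LT_{a\cdot 1}^2\|_G^2 = \lim_{m\to\infty}\frac{1}{m}\sum_{p=1}^m (p/m)^{-1} = \infty$. Hence the square of an operator of finite $G$-norm can have infinite $G$-norm. -/

import Mathlib

open Filter Finset MeasureTheory
open scoped ENNReal

noncomputable section

/-- The index set `I = (0,1] ∩ ℚ`. -/
abbrev Iq : Type := {q : ℚ // 0 < q ∧ q ≤ 1}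

/-- The Hilbert space `ℋ² = ⊕_{l ∈ I} H²[-π,π]`, realized via the orthonormal basis
`{e_{lk} : l ∈ I, k ∈ ℕ}` as `ℓ²(I × ℕ)`. -/
abbrev H2 : Type := lp (fun _ : Iq × ℕ => ℂ) 2

/-- The basis vector `e_{lk}` of `ℋ²` (zero if `l ∉ (0,1]`). -/
def basisVec (l : ℚ) (k : ℕ) : H2 :=
  if h : 0 < l ∧ l ≤ 1 then lp.single 2 ((⟨l, h⟩ : Iq), k) (1 : ℂ) else 0

/-- Index set for `Bₙ = {e_{lr} : r = 0,…,⌊n/⌊√n⌋⌋-1, l ∈ I_{⌊√n⌋}}`: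
pairs `(p, r)` with `1 ≤ p ≤ ⌊√n⌋` and `r < ⌊n/⌊√n⌋⌋`, where `l = p/⌊√n⌋`. -/
def Bfin (n : ℕ) : Finset (ℕ × ℕ) :=
  (Finset.Icc 1 (Nat.sqrt n)) ×ˢ (Finset.range (n / Nat.sqrt n))

/-- The basis vector of `Bₙ` indexed by `(p, r)`, namely `e_{p/⌊√n⌋, r}`. -/
def bvec (n : ℕ) (pr : ℕ × ℕ) : H2 :=
  basisVec ((pr.1 : ℚ) / (Nat.sqrt n : ℚ)) pr.2

/-- `∑_{e ∈ C} ‖Te‖²` for a subset `C` of the index set of `Bₙ`. -/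
def sumSq (T : H2 → H2) (n : ℕ) (C : Finset (ℕ × ℕ)) : ℝ :=
  ∑ pr ∈ C, ‖T (bvec n pr)‖ ^ 2

/-- The seminorm `Q(T) = inf { limsup_n (1/√n)(∑_{e ∈ Cₙ} ‖Te‖²)^{1/2} }`, the infimum
over all decompositions `Bₙ = Cₙ ⊔ Dₙ` with `#Dₙ = o(n)`, valued in `ℝ≥0∞`. -/
def QQ (T : H2 → H2) : ℝ≥0∞ :=
  ⨅ (C : ℕ → Finset (ℕ × ℕ)) (_ : ∀ n, C n ⊆ Bfin n)
    (_ : Tendsto (fun n => ((Bfin n \ C n).card : ℝ) / n) atTop (nhds 0)),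
    Filter.limsup (fun n => ENNReal.ofReal (Real.sqrt (sumSq T n (C n) / n))) atTop

/-- `T` acts like the operator `T_{jk}`:
`T(e_{lr}) = e^{2πijl} e_{l,r+k}` when `r + k ≥ 0`, and `0` otherwise. -/
def IsTjk (T : H2 → H2) (j k : ℤ) : Prop :=
  ∀ (l : ℚ) (r : ℕ), T (basisVec l r) =
    if 0 ≤ (r : ℤ) + k then
      Complex.exp (2 * Real.pi * Complex.I * (j : ℂ) * (l : ℂ)) • basisVec l ((r : ℤ) + k).toNat
    else 0

namespace LTaux

/-- sum of p^{-1/2} for p = 1..m -/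
def S (m : ℕ) : ℝ := ∑ p ∈ Finset.Icc 1 m, ((p : ℝ)) ^ (-(1/2 : ℝ))

/-- harmonic-like sum -/
def H (m : ℕ) : ℝ := ∑ p ∈ Finset.Icc 1 m, ((p : ℝ)) ^ (-(1 : ℝ))

lemma rpow_neg_half (x : ℝ) (hx : 0 ≤ x) : x ^ (-(1/2 : ℝ)) = (Real.sqrt x)⁻¹ := by
  rw [Real.rpow_neg hx, Real.sqrt_eq_rpow]

lemma S_le (m : ℕ) : S m ≤ 2 * Real.sqrt m := by
  induction m with
  | zero => simp [S]
  | succ m ih =>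
    rw [S, Finset.sum_Icc_succ_top (by omega)]
    have h1 : ((m + 1 : ℕ) : ℝ) ^ (-(1/2 : ℝ)) = (Real.sqrt (m + 1))⁻¹ := by
      rw [rpow_neg_half _ (by positivity)]; norm_num
    rw [h1]
    have hb : (0:ℝ) < Real.sqrt (m+1) := Real.sqrt_pos.2 (by positivity)
    have ha2 : Real.sqrt m ^ 2 = m := Real.sq_sqrt (by positivity)
    have hb2 : Real.sqrt (m+1) ^ 2 = m+1 := Real.sq_sqrt (by positivity)
    have hab : Real.sqrt m ≤ Real.sqrt (m+1) := Real.sqrt_le_sqrt (by norm_num)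
    have key : (Real.sqrt (m+1))⁻¹ ≤ 2 * (Real.sqrt (m+1) - Real.sqrt m) := by
      rw [inv_eq_one_div, div_le_iff₀ hb]
      nlinarith [sq_nonneg (Real.sqrt m - Real.sqrt (m+1))]
    have : S m + (Real.sqrt (m+1))⁻¹ ≤ 2 * Real.sqrt m + 2 * (Real.sqrt (m+1) - Real.sqrt m) :=
      add_le_add ih key
    calc S m + (Real.sqrt (m+1))⁻¹ ≤ 2 * Real.sqrt m + 2 * (Real.sqrt (m+1) - Real.sqrt m) := this
      _ = 2 * Real.sqrt (m+1) := by ring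
      _ = 2 * Real.sqrt ((m+1 : ℕ) : ℝ) := by norm_num

lemma le_S (m : ℕ) : 2 * (Real.sqrt (m+1) - 1) ≤ S m := by
  induction m with
  | zero => simp [S]
  | succ m ih =>
    rw [S, Finset.sum_Icc_succ_top (by omega)]
    have h1 : ((m + 1 : ℕ) : ℝ) ^ (-(1/2 : ℝ)) = (Real.sqrt (m + 1))⁻¹ := by
      rw [rpow_neg_half _ (by positivity)]; norm_num
    rw [h1]
    have hb : (0:ℝ) < Real.sqrt (m+1) := Real.sqrt_pos.2 (by positivity)
    have hb2 : Real.sqrt (m+1) ^ 2 = m+1 := Real.sq_sqrt (by positivity)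
    have hc2 : Real.sqrt (m+2) ^ 2 = m+2 := Real.sq_sqrt (by positivity)
    have hbc : Real.sqrt (m+1) ≤ Real.sqrt (m+2) := Real.sqrt_le_sqrt (by norm_num)
    have key : 2 * (Real.sqrt (m+2) - Real.sqrt (m+1)) ≤ (Real.sqrt (m+1))⁻¹ := by
      rw [inv_eq_one_div, le_div_iff₀ hb]
      nlinarith [sq_nonneg (Real.sqrt (m+2) - Real.sqrt (m+1))]
    have h2 : ((m + 1 : ℕ) : ℝ) + 1 = ((m : ℝ) + 2) := by push_cast; ring
    rw [show ((m+1 : ℕ) : ℝ) = (m : ℝ) + 1 by push_cast; ring] at *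
    calc 2 * (Real.sqrt ((m:ℝ)+1+1) - 1) = 2 * (Real.sqrt ((m:ℝ)+2) - 1) := by norm_num [add_assoc]
      _ ≤ 2 * (Real.sqrt ((m:ℝ)+1) - 1) + (Real.sqrt ((m:ℝ)+1))⁻¹ := by nlinarith [key]
      _ ≤ S m + (Real.sqrt ((m:ℝ)+1))⁻¹ := by nlinarith [ih]

lemma sqrtn_tendsto : Tendsto (fun n : ℕ => Real.sqrt n) atTop atTop := by
  have h1 : Tendsto Real.sqrt atTop atTop := by
    have := tendsto_rpow_atTop (y := (1/2 : ℝ)) (by norm_num)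
    refine this.congr' ?_
    filter_upwards [eventually_ge_atTop (0:ℝ)] with x hx
    rw [Real.sqrt_eq_rpow]
  exact h1.comp tendsto_natCast_atTop_atTop

lemma inv_sqrtn_tendsto : Tendsto (fun n : ℕ => (Real.sqrt n)⁻¹) atTop (nhds 0) :=
  sqrtn_tendsto.inv_tendsto_atTop

/-- the Riemann-type limit -/
lemma g_tendsto : Tendsto (fun m : ℕ => S m / Real.sqrt m) atTop (nhds 2) := by
  have hlow : Tendsto (fun m : ℕ => 2 - 2 * (Real.sqrt m)⁻¹) atTop (nhds 2) := by
    have := inv_sqrtn_tendsto.const_mul (2:ℝ)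
    simpa using (tendsto_const_nhds (x := (2:ℝ)) (f := atTop)).sub this
  refine tendsto_of_tendsto_of_tendsto_of_le_of_le' hlow tendsto_const_nhds ?_ ?_
  · filter_upwards [eventually_ge_atTop 1] with m hm
    have hb : (0:ℝ) < Real.sqrt m := Real.sqrt_pos.2 (by exact_mod_cast Nat.pos_of_ne_zero (by omega))
    have h1 : 2 * (Real.sqrt m - 1) ≤ S m := by
      refine le_trans ?_ (le_S m)
      have : Real.sqrt m ≤ Real.sqrt (m+1) := Real.sqrt_le_sqrt (by norm_num)
      linarith
    rw [div_eq_mul_inv]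
    calc 2 - 2 * (Real.sqrt m)⁻¹ = (2 * (Real.sqrt m - 1)) * (Real.sqrt m)⁻¹ := by
          field_simp
      _ ≤ S m * (Real.sqrt m)⁻¹ := by
          apply mul_le_mul_of_nonneg_right h1 (by positivity)
  · filter_upwards [eventually_ge_atTop 1] with m hm
    have hb : (0:ℝ) < Real.sqrt m := Real.sqrt_pos.2 (by exact_mod_cast Nat.pos_of_ne_zero (by omega))
    rw [div_le_iff₀ hb]
    simpa [mul_comm] using S_le m

lemma H_tendsto : Tendsto H atTop atTop := by
  have heq : ∀ m, H m = ∑ i ∈ Finset.range m, (1 / (i + 1) : ℝ) := by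
    intro m
    induction m with
    | zero => simp [H]
    | succ m ih =>
      rw [H, Finset.sum_Icc_succ_top (by omega), ← H, ih, Finset.sum_range_succ]
      congr 1
      rw [Real.rpow_neg_one]
      push_cast
      rw [inv_eq_one_div]
  rw [funext heq]
  exact Real.tendsto_sum_range_one_div_nat_succ_atTop

lemma natSqrt_tendsto : Tendsto Nat.sqrt atTop atTop := by
  apply tendsto_atTop_atTop_of_monotone (fun a b h => Nat.sqrt_le_sqrt h)
  intro b
  exact ⟨b * b, by rw [Nat.sqrt_eq]⟩

/-- the factor c n = ⌊n/√n⌋·√n/n tends to 1 -/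
def c (n : ℕ) : ℝ := ((n / Nat.sqrt n : ℕ) : ℝ) * (Nat.sqrt n : ℝ) / n

lemma c_le_one {n : ℕ} (hn : 1 ≤ n) : c n ≤ 1 := by
  rw [c, div_le_one (by exact_mod_cast hn)]
  exact_mod_cast Nat.div_mul_le_self n (Nat.sqrt n)

lemma le_c {n : ℕ} (hn : 1 ≤ n) : 1 - (Real.sqrt n)⁻¹ ≤ c n := by
  have hm : 1 ≤ Nat.sqrt n := Nat.sqrt_pos.2 hn
  have hlt : n < n / Nat.sqrt n * Nat.sqrt n + Nat.sqrt n := Nat.lt_div_mul_add (by omega)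
  have h1 : (n : ℝ) - Nat.sqrt n ≤ ((n / Nat.sqrt n : ℕ) : ℝ) * (Nat.sqrt n : ℝ) := by
    have h2 : (n : ℝ) < ((n / Nat.sqrt n * Nat.sqrt n + Nat.sqrt n : ℕ) : ℝ) := by
      exact_mod_cast hlt
    push_cast at h2
    linarith
  have hsq : (Nat.sqrt n : ℝ) ≤ Real.sqrt n := Real.nat_sqrt_le_real_sqrt
  have hs : (0:ℝ) < Real.sqrt n := Real.sqrt_pos.2 (by exact_mod_cast hn)
  have hnn : (0:ℝ) < n := by exact_mod_cast hn
  have hss : Real.sqrt n * Real.sqrt n = n := Real.mul_self_sqrt (by positivity)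
  rw [c, le_div_iff₀ hnn]
  have h4 : (Real.sqrt n)⁻¹ * n = Real.sqrt n := by
    field_simp
    rw [sq, hss]
  calc (1 - (Real.sqrt n)⁻¹) * n = n - (Real.sqrt n)⁻¹ * n := by ring
    _ = n - Real.sqrt n := by rw [h4]
    _ ≤ (n:ℝ) - (Nat.sqrt n : ℝ) := by linarith
    _ ≤ _ := h1

lemma c_tendsto : Tendsto c atTop (nhds 1) := by
  have hlow : Tendsto (fun n : ℕ => 1 - (Real.sqrt n)⁻¹) atTop (nhds 1) := by
    simpa using (tendsto_const_nhds (x := (1:ℝ)) (f := atTop)).sub inv_sqrtn_tendsto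
  refine tendsto_of_tendsto_of_tendsto_of_le_of_le' hlow tendsto_const_nhds ?_ ?_
  · filter_upwards [eventually_ge_atTop 1] with n hn using le_c hn
  · filter_upwards [eventually_ge_atTop 1] with n hn using c_le_one hn

lemma norm_basisVec (l : ℚ) (h : 0 < l ∧ l ≤ 1) (k : ℕ) : ‖basisVec l k‖ = 1 := by
  rw [basisVec, dif_pos h]
  simpa using lp.norm_single (p := 2) (E := fun _ : Iq × ℕ => ℂ)
    (by norm_num) (fun _ => (1 : ℂ)) ((⟨l, h⟩ : Iq), k)

lemma sumSq_diag (U : H2 → H2) (n : ℕ) (f : ℕ → ℝ)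
    (hU : ∀ p ∈ Finset.Icc 1 (Nat.sqrt n), ∀ r,
      ‖U (basisVec ((p : ℚ) / (Nat.sqrt n : ℚ)) r)‖ ^ 2 = f p) :
    sumSq U n (Bfin n) =
      ((n / Nat.sqrt n : ℕ) : ℝ) * ∑ p ∈ Finset.Icc 1 (Nat.sqrt n), f p := by
  rw [sumSq, Bfin, Finset.sum_product, Finset.mul_sum]
  refine Finset.sum_congr rfl fun p hp => ?_
  have h1 : ∀ r ∈ Finset.range (n / Nat.sqrt n), ‖U (bvec n (p, r))‖ ^ 2 = f p := by
    intro r _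
    simpa [bvec] using hU p hp r
  rw [Finset.sum_congr rfl h1, Finset.sum_const, Finset.card_range, nsmul_eq_mul]

lemma hl_mem {n p : ℕ} (hp : p ∈ Finset.Icc 1 (Nat.sqrt n)) :
    0 < ((p : ℚ) / (Nat.sqrt n : ℚ)) ∧ ((p : ℚ) / (Nat.sqrt n : ℚ)) ≤ 1 := by
  rw [Finset.mem_Icc] at hp
  have hm : 1 ≤ Nat.sqrt n := le_trans hp.1 hp.2
  constructor
  · apply div_pos (by exact_mod_cast hp.1) (by exact_mod_cast hm)
  · rw [div_le_one (by exact_mod_cast hm)]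
    exact_mod_cast hp.2

end LTaux

open LTaux

/-- The Locally Toeplitz operator `LT_{a·1}` with `a(x) = x^{-1/4}`, `f ≡ 1`, acting by
`LT_{a·1}(e_{lr}) = l^{-1/4} e_{lr}`, has `‖LT_{a·1}‖_G² = 2 < ∞`, while its square, acting by
`l^{-1/2} e_{lr}`, has `‖LT_{a·1}²‖_G² = lim_m (1/m) ∑_{p=1}^m (p/m)^{-1} = ∞`. -/
theorem LT_square_infinite_Gnorm (T : H2 →ₗ[ℂ] H2)
    (hT : ∀ (l : ℚ) (r : ℕ), T (basisVec l r) =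
      ((((l : ℝ) ^ (-(1/4 : ℝ)) : ℝ) : ℂ)) • basisVec l r) :
    Filter.Tendsto (fun n : ℕ => (1 / (n : ℝ)) * sumSq ⇑T n (Bfin n)) atTop (nhds 2) ∧
    Filter.Tendsto (fun n : ℕ => (1 / (n : ℝ)) * sumSq (⇑T ∘ ⇑T) n (Bfin n)) atTop atTop := by
  classical
  constructor
  · -- finite G-norm squared = 2
    have key1 : ∀ n : ℕ, 1 ≤ n → (1 / (n : ℝ)) * sumSq ⇑T n (Bfin n) =
        c n * (S (Nat.sqrt n) / Real.sqrt (Nat.sqrt n)) := by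
      intro n hn
      set m := Nat.sqrt n with hm
      have hm1 : 1 ≤ m := Nat.sqrt_pos.2 hn
      have hms : (0:ℝ) < Real.sqrt m := Real.sqrt_pos.2 (by exact_mod_cast hm1)
      have hss : Real.sqrt m * Real.sqrt m = (m:ℝ) := Real.mul_self_sqrt (by positivity)
      have hnn : (0:ℝ) < n := by exact_mod_cast hn
      have hnorm : ∀ p ∈ Finset.Icc 1 m, ∀ r,
          ‖T (basisVec ((p : ℚ) / (m : ℚ)) r)‖ ^ 2 = ((p:ℝ)) ^ (-(1/2:ℝ)) * Real.sqrt m := by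
        intro p hp r
        have hl := hl_mem hp
        have hx : (((p : ℚ) / (m : ℚ) : ℚ) : ℝ) = (p:ℝ)/(m:ℝ) := by push_cast; ring
        have hx0 : (0:ℝ) < (((p : ℚ) / (m : ℚ) : ℚ) : ℝ) := by exact_mod_cast hl.1
        rw [hT _ r, norm_smul, norm_basisVec _ hl, mul_one, Complex.norm_real,
          Real.norm_of_nonneg (Real.rpow_nonneg hx0.le _)]
        rw [← Real.rpow_natCast ((((p : ℚ) / (m : ℚ) : ℚ) : ℝ) ^ (-(1/4:ℝ))) 2,
          ← Real.rpow_mul hx0.le]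
        norm_num
        rw [Finset.mem_Icc] at hp
        have hp0 : (0:ℝ) < (p:ℝ) := by exact_mod_cast hp.1
        have hm0 : (0:ℝ) < (m:ℝ) := by exact_mod_cast hm1
        rw [Real.div_rpow hp0.le hm0.le, rpow_neg_half _ hm0.le, div_eq_mul_inv, inv_inv]
      rw [sumSq_diag ⇑T n _ hnorm, ← Finset.sum_mul, ← S]
      have hms' : (m:ℝ) / Real.sqrt m = Real.sqrt m := by
        rw [div_eq_iff hms.ne']
        exact hss.symm
      calc 1/(n:ℝ) * (((n / m : ℕ) : ℝ) * (S m * Real.sqrt m))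
          = ((n / m : ℕ) : ℝ) * (S m * ((m:ℝ) / Real.sqrt m)) / n := by rw [hms']; ring
        _ = c n * (S m / Real.sqrt m) := by rw [c]; ring
    have hlim : Tendsto (fun n : ℕ => c n * (S (Nat.sqrt n) / Real.sqrt (Nat.sqrt n)))
        atTop (nhds 2) := by
      have := c_tendsto.mul (g_tendsto.comp natSqrt_tendsto)
      simpa using this
    refine hlim.congr' ?_
    filter_upwards [eventually_ge_atTop 1] with n hn
    exact (key1 n hn).symm
  · -- infinite G-norm for the square
    have key2 : ∀ n : ℕ, 1 ≤ n → (1 / (n : ℝ)) * sumSq (⇑T ∘ ⇑T) n (Bfin n) =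
        c n * H (Nat.sqrt n) := by
      intro n hn
      set m := Nat.sqrt n with hm
      have hm1 : 1 ≤ m := Nat.sqrt_pos.2 hn
      have hnn : (0:ℝ) < n := by exact_mod_cast hn
      have hm0 : (0:ℝ) < (m:ℝ) := by exact_mod_cast hm1
      have hnorm : ∀ p ∈ Finset.Icc 1 m, ∀ r,
          ‖(⇑T ∘ ⇑T) (basisVec ((p : ℚ) / (m : ℚ)) r)‖ ^ 2 = ((p:ℝ)) ^ (-(1:ℝ)) * (m:ℝ) := by
        intro p hp r
        have hl := hl_mem hp
        have hx : (((p : ℚ) / (m : ℚ) : ℚ) : ℝ) = (p:ℝ)/(m:ℝ) := by push_cast; ring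
        have hx0 : (0:ℝ) < (((p : ℚ) / (m : ℚ) : ℚ) : ℝ) := by exact_mod_cast hl.1
        set x : ℝ := (((p : ℚ) / (m : ℚ) : ℚ) : ℝ) with hxdef
        have hstep : (⇑T ∘ ⇑T) (basisVec ((p : ℚ) / (m : ℚ)) r) =
            (((x ^ (-(1/4:ℝ)) * x ^ (-(1/4:ℝ)) : ℝ) : ℂ)) • basisVec ((p : ℚ) / (m : ℚ)) r := by
          rw [Function.comp_apply, hT _ r, LinearMap.map_smul, hT _ r, smul_smul,
            ← Complex.ofReal_mul]
        rw [hstep, norm_smul, norm_basisVec _ hl, mul_one, Complex.norm_real,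
          Real.norm_of_nonneg (mul_nonneg (Real.rpow_nonneg hx0.le _) (Real.rpow_nonneg hx0.le _))]
        rw [← Real.rpow_add hx0]
        norm_num
        rw [← Real.rpow_natCast (x ^ (-(1/2:ℝ))) 2, ← Real.rpow_mul hx0.le]
        norm_num
        rw [hx, Real.rpow_neg_one ((p:ℝ)/(m:ℝ)), Real.rpow_neg_one (p:ℝ), inv_div]
        ring
      rw [sumSq_diag (⇑T ∘ ⇑T) n _ hnorm, ← Finset.sum_mul, ← H, c]
      field_simp
      ring
    have hlim : Tendsto (fun n : ℕ => c n * H (Nat.sqrt n)) atTop atTop :=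
      Filter.Tendsto.pos_mul_atTop one_pos c_tendsto (H_tendsto.comp natSqrt_tendsto)
    refine hlim.congr' ?_
    filter_upwards [eventually_ge_atTop 1] with n hn
    exact (key2 n hn).symm
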